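/- arXiv:1703.08980 — 2 statements merged into one kernel-verified Lean document; each statement's English description precedes it below -/
import Mathlib

section
/- Let r ≥ 2, m ≥ 1, k ≥ 0, and let (A, μ) be the multi-arrangement in ℂ² with defining polynomial Q(A,μ) = x^{kr+1} y^{kr+1} (x^r − y^r)^{2m+1}. Then (A,μ) is free with exponents exp(A,μ) = { (m+k)r + 1, (m+k+1)r + 1 }. Moreover, there are homogeneous polynomials q_1, q_2 ∈ ℤ[x,y] of degree m such that (i) the coefficients of x^m and of y^m in both q_1 and q_2 are nonzero, and (ii) the homogeneous derivations θ_1 := x^{kr+1} q_1(x^r, y^r) ∂_x + y^{kr+1} q_1(y^r, x^r) ∂_y and θ_2 := x^{kr+1} y^r q_2(x^r, y^r) ∂_x + y^{kr+1} x^r q_2(y^r, x^r) ∂_y form an S-basis of D(A,μ). -/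
open MvPolynomial

noncomputable section

abbrev PolyS (ℓ : ℕ) := MvPolynomial (Fin ℓ) ℂ

/-- Membership in `D(A, μ)` for the multi-arrangement in `ℂ^ℓ` consisting of the
coordinate hyperplanes `ker x_i` with multiplicity `mult0 i` and the hyperplanes
`ker (x_i - ζ x_j)` (for `i < j` and `ζ` an `r`-th root of unity) with
multiplicity `multH`.  (A multiplicity `0` means the hyperplane is absent.) -/
def InDeriv {ℓ : ℕ} (r : ℕ) (mult0 : Fin ℓ → ℕ) (multH : ℕ)
    (θ : Derivation ℂ (PolyS ℓ) (PolyS ℓ)) : Prop :=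
  (∀ i, θ (X i) ∈ Ideal.span {(X i : PolyS ℓ) ^ mult0 i}) ∧
  ∀ i j : Fin ℓ, i < j → ∀ ζ : ℂ, ζ ^ r = 1 →
    θ (X i - C ζ * X j) ∈ Ideal.span {(X i - C ζ * X j : PolyS ℓ) ^ multH}

/-- `θ` is homogeneous of polynomial degree `p`. -/
def IsHomogDeriv {ℓ : ℕ} (θ : Derivation ℂ (PolyS ℓ) (PolyS ℓ)) (p : ℕ) : Prop :=
  ∀ i, (θ (X i)).IsHomogeneous p

/-- The multi-arrangement with derivation-module membership predicate `P` is free with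
exponents `e 0, …, e (ℓ-1)`: there is a basis of the module of derivations consisting
of `ℓ` homogeneous derivations of polynomial degrees `e 0, …, e (ℓ-1)`. -/
def IsFreeWithExponents {ℓ : ℕ} (P : Derivation ℂ (PolyS ℓ) (PolyS ℓ) → Prop)
    (e : Fin ℓ → ℕ) : Prop :=
  ∃ θ : Fin ℓ → Derivation ℂ (PolyS ℓ) (PolyS ℓ),
    (∀ i, P (θ i)) ∧
    LinearIndependent (PolyS ℓ) θ ∧
    (∀ η, P η → η ∈ Submodule.span (PolyS ℓ) (Set.range θ)) ∧
    (∀ i, IsHomogDeriv (θ i) (e i))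

/-- Variant of `IsFreeWithExponents` with the exponents given as integers. -/
def IsFreeWithExponentsZ {ℓ : ℕ} (P : Derivation ℂ (PolyS ℓ) (PolyS ℓ) → Prop)
    (e : Fin ℓ → ℤ) : Prop :=
  ∃ θ : Fin ℓ → Derivation ℂ (PolyS ℓ) (PolyS ℓ),
    (∀ i, P (θ i)) ∧
    LinearIndependent (PolyS ℓ) θ ∧
    (∀ η, P η → η ∈ Submodule.span (PolyS ℓ) (Set.range θ)) ∧
    (∀ i, ∃ p : ℕ, (p : ℤ) = e i ∧ IsHomogDeriv (θ i) p)
namespace StmtAux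
section ZPart



variable (m r : ℕ) (w : ℤ)

def Ev (i : Fin (m+1)) : ℤ := r * (w + 2*(i:ℕ)) + 1

def Uv (i : Fin (m+1)) : ℤ := (Ev m r w i)^2

def vd (i : Fin (m+1)) : ℤ :=
  (Matrix.vandermonde (fun t => Uv m r w (i.succAbove t))).det

def cz (i : Fin (m+1)) : ℤ :=
  (-1)^(i:ℕ) * vd m r w i * ∏ j ∈ Finset.univ.erase i, Ev m r w j

variable (hr : 2 ≤ r)
include hr

private lemma r_not_unit (z : ℤ) (h : (r:ℤ) * z = -1) : False := by
  have h1 : (r:ℤ) ∣ -1 := ⟨z, h.symm⟩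
  have h2 : (r:ℤ) ∣ 1 := (dvd_neg.1 h1)
  have := Int.le_of_dvd one_pos h2
  omega

lemma Ev_ne_zero (i : Fin (m+1)) : Ev m r w i ≠ 0 := by
  unfold Ev
  intro h
  exact r_not_unit r hr (w + 2*(i:ℕ)) (by linarith)

lemma Ev_add_ne_zero (i j : Fin (m+1)) : Ev m r w i + Ev m r w j ≠ 0 := by
  unfold Ev
  intro h
  have h2 : (2:ℤ) * ((r:ℤ) * (w + (i:ℕ) + (j:ℕ)) + 1) = 0 := by ring_nf; ring_nf at h; linarith
  exact r_not_unit r hr (w + (i:ℕ) + (j:ℕ)) (by linarith)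

lemma Ev_injective : Function.Injective (Ev m r w) := by
  intro i j h
  unfold Ev at h
  have hr0 : (0:ℤ) < r := by exact_mod_cast Nat.lt_of_lt_of_le two_pos hr
  have : ((i:ℕ):ℤ) = ((j:ℕ):ℤ) := by nlinarith [h]
  exact Fin.ext (by exact_mod_cast this)

lemma Uv_injective : Function.Injective (Uv m r w) := by
  intro i j h
  unfold Uv at h
  have h2 : (Ev m r w i - Ev m r w j) * (Ev m r w i + Ev m r w j) = 0 := by ring_nf; linarith [h]
  rcases mul_eq_zero.1 h2 with h3 | h3
  · exact Ev_injective m r w hr (by linarith)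
  · exact absurd h3 (Ev_add_ne_zero m r w hr i j)

lemma vd_ne_zero (i : Fin (m+1)) : vd m r w i ≠ 0 := by
  unfold vd
  rw [Matrix.det_vandermonde]
  apply Finset.prod_ne_zero_iff.2
  intro a _
  apply Finset.prod_ne_zero_iff.2
  intro b hb
  have hab : a ≠ b := (Finset.mem_Ioi.1 hb).ne
  exact sub_ne_zero.2 fun heq =>
    hab (Fin.succAbove_right_injective (Uv_injective m r w hr heq.symm))

lemma cz_ne_zero (i : Fin (m+1)) : cz m r w i ≠ 0 := by
  unfold cz
  apply mul_ne_zero (mul_ne_zero _ (vd_ne_zero m r w hr i))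
  · exact Finset.prod_ne_zero_iff.2 fun j _ => Ev_ne_zero m r w hr j
  · exact pow_ne_zero _ (by norm_num)

omit hr

lemma sum_vd (p : ℕ) (hp : p < m) :
    ∑ i : Fin (m+1), (-1)^(i:ℕ) * vd m r w i * Uv m r w i ^ p = 0 := by
  classical
  set M : Matrix (Fin (m+1)) (Fin (m+1)) ℤ :=
    fun i s => Fin.cases (Uv m r w i ^ p) (fun s' => Uv m r w i ^ (s':ℕ)) s with hM
  have hdet : M.det = 0 := by
    apply Matrix.det_zero_of_column_eq (i := 0) (j := Fin.succ ⟨p, hp⟩)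
    · exact (Fin.succ_ne_zero _).symm
    · intro k; simp [hM]
  have key : ∑ i : Fin (m+1), (-1)^(i:ℕ) * vd m r w i * Uv m r w i ^ p = M.det := by
    rw [Matrix.det_succ_column_zero]
    apply Finset.sum_congr rfl
    intro i _
    have h0 : M i 0 = Uv m r w i ^ p := rfl
    have hsub : M.submatrix i.succAbove Fin.succ
        = Matrix.vandermonde (fun t => Uv m r w (i.succAbove t)) := by
      ext t s
      simp [hM, Matrix.vandermonde, Matrix.submatrix]
    rw [h0, hsub]
    unfold vd
    ring
  rw [key, hdet]

lemma sum_cE (p : ℕ) (hp : p < m) :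
    ∑ i : Fin (m+1), cz m r w i * Ev m r w i ^ (2*p+1) = 0 := by
  classical
  have key : ∀ i : Fin (m+1), cz m r w i * Ev m r w i ^ (2*p+1)
      = (∏ j : Fin (m+1), Ev m r w j) * ((-1)^(i:ℕ) * vd m r w i * Uv m r w i ^ p) := by
    intro i
    unfold cz Uv
    rw [← Finset.mul_prod_erase Finset.univ _ (Finset.mem_univ i)]
    ring
  rw [Finset.sum_congr rfl fun i _ => key i, ← Finset.mul_sum, sum_vd, mul_zero]
  exact hp

section Sums
variable {m r : ℕ} {w : ℤ}

lemma sum_pow (α β : Fin (m+1) → ℤ) (D : ℤ)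
    (hd : ∀ i, α i - β i = Ev m r w i) (hs : ∀ i, α i + β i = D)
    (j : ℕ) (hj : j ≤ 2*m) :
    ∑ i : Fin (m+1), cz m r w i * (α i ^ j - β i ^ j) = 0 := by
  classical
  have key : (2:ℤ)^j * ∑ i : Fin (m+1), cz m r w i * (α i ^ j - β i ^ j) = 0 := by
    have step1 : (2:ℤ)^j * ∑ i : Fin (m+1), cz m r w i * (α i ^ j - β i ^ j)
        = ∑ i : Fin (m+1), cz m r w i * ((D + Ev m r w i)^j - (D - Ev m r w i)^j) := by
      rw [Finset.mul_sum]
      apply Finset.sum_congr rfl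
      intro i _
      have h1 : D + Ev m r w i = 2 * α i := by have := hd i; have := hs i; linarith
      have h2 : D - Ev m r w i = 2 * β i := by have := hd i; have := hs i; linarith
      rw [h1, h2, mul_pow, mul_pow]; ring
    have step2 : ∀ i : Fin (m+1), cz m r w i * ((D + Ev m r w i)^j - (D - Ev m r w i)^j)
        = ∑ l ∈ Finset.range (j+1),
            cz m r w i * ((Ev m r w i ^ l - (-Ev m r w i)^l) * D^(j-l) * (j.choose l)) := by
      intro i
      have e1 : (D + Ev m r w i)^j
          = ∑ l ∈ Finset.range (j+1), Ev m r w i ^ l * D^(j-l) * (j.choose l) := by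
        rw [add_comm]; exact add_pow _ _ _
      have e2 : (D - Ev m r w i)^j
          = ∑ l ∈ Finset.range (j+1), (-Ev m r w i) ^ l * D^(j-l) * (j.choose l) := by
        rw [sub_eq_add_neg, add_comm]; exact add_pow _ _ _
      rw [e1, e2, ← Finset.sum_sub_distrib, Finset.mul_sum]
      apply Finset.sum_congr rfl
      intro l _; ring
    rw [step1, Finset.sum_congr rfl fun i _ => step2 i, Finset.sum_comm]
    apply Finset.sum_eq_zero
    intro l hl
    rcases Nat.even_or_odd l with he | ho
    · apply Finset.sum_eq_zero
      intro i _
      rw [he.neg_pow]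
      ring
    · obtain ⟨p, hp⟩ := ho
      have hpm : p < m := by
        have := Finset.mem_range.1 hl; omega
      have step3 : ∀ i : Fin (m+1),
          cz m r w i * ((Ev m r w i ^ l - (-Ev m r w i)^l) * D^(j-l) * (j.choose l))
          = (2 * D^(j-l) * (j.choose l)) * (cz m r w i * Ev m r w i ^ (2*p+1)) := by
        intro i
        have hol : Odd l := ⟨p, hp⟩
        rw [hol.neg_pow, hp]; ring
      rw [Finset.sum_congr rfl fun i _ => step3 i, ← Finset.mul_sum,
        sum_cE m r w p hpm, mul_zero]
  have h2j : ((2:ℤ)^j) ≠ 0 := by positivity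
  exact (mul_eq_zero.1 key).resolve_left h2j

lemma sum_desc (A B : Fin (m+1) → ℕ) (D : ℤ)
    (hd : ∀ i, (A i : ℤ) - (B i : ℤ) = Ev m r w i) (hs : ∀ i, (A i : ℤ) + B i = D)
    (j : ℕ) (hj : j ≤ 2*m) :
    ∑ i : Fin (m+1), cz m r w i * (((A i).descFactorial j : ℤ) - ((B i).descFactorial j : ℤ))
      = 0 := by
  classical
  set h : Polynomial ℤ := descPochhammer ℤ j with hh
  have hdeg : h.natDegree < 2*m+1 := by
    rw [hh, descPochhammer_natDegree]; omega
  have heval : ∀ n : ℕ, ((n.descFactorial j : ℤ))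
      = ∑ l ∈ Finset.range (2*m+1), h.coeff l * (n:ℤ)^l := by
    intro n
    rw [← descPochhammer_eval_eq_descFactorial ℤ n j, Polynomial.eval_eq_sum_range' hdeg]
  have stepA : ∀ i : Fin (m+1), cz m r w i
        * (((A i).descFactorial j : ℤ) - ((B i).descFactorial j : ℤ))
      = ∑ l ∈ Finset.range (2*m+1),
          cz m r w i * (h.coeff l * (((A i : ℤ))^l - ((B i : ℤ))^l)) := by
    intro i
    rw [heval (A i), heval (B i), ← Finset.sum_sub_distrib, Finset.mul_sum]
    apply Finset.sum_congr rfl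
    intro l _; ring
  rw [Finset.sum_congr rfl fun i _ => stepA i, Finset.sum_comm]
  apply Finset.sum_eq_zero
  intro l hl
  have hl2m : l ≤ 2*m := by have := Finset.mem_range.1 hl; omega
  have inner := sum_pow (fun i => (A i : ℤ)) (fun i => (B i : ℤ)) D hd hs l hl2m
  calc ∑ i : Fin (m+1), cz m r w i * (h.coeff l * (((A i : ℤ))^l - ((B i : ℤ))^l))
      = h.coeff l * ∑ i : Fin (m+1), cz m r w i * (((A i : ℤ))^l - ((B i : ℤ))^l) := by
        rw [Finset.mul_sum]; apply Finset.sum_congr rfl; intro i _; ring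
    _ = 0 := by rw [inner, mul_zero]

lemma sum_choose (A B : Fin (m+1) → ℕ) (D : ℤ)
    (hd : ∀ i, (A i : ℤ) - (B i : ℤ) = Ev m r w i) (hs : ∀ i, (A i : ℤ) + B i = D)
    (j : ℕ) (hj : j ≤ 2*m) :
    ∑ i : Fin (m+1), cz m r w i * (((A i).choose j : ℤ) - ((B i).choose j : ℤ)) = 0 := by
  have key : ((j.factorial : ℤ))
      * ∑ i : Fin (m+1), cz m r w i * (((A i).choose j : ℤ) - ((B i).choose j : ℤ)) = 0 := by
    rw [Finset.mul_sum, ← sum_desc A B D hd hs j hj]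
    apply Finset.sum_congr rfl
    intro i _
    rw [Nat.descFactorial_eq_factorial_mul_choose (A i) j,
        Nat.descFactorial_eq_factorial_mul_choose (B i) j]
    push_cast
    ring
  have hfac : ((j.factorial : ℤ)) ≠ 0 := by exact_mod_cast j.factorial_ne_zero
  exact (mul_eq_zero.1 key).resolve_left hfac

end Sums



/-- If all low coefficients of `q ∘ (X + γ)` vanish then `(X - γ)^n ∣ q`. -/
lemma dvd_of_comp_coeff {R : Type*} [CommRing R] (n : ℕ) (q : Polynomial R) (γ : R)
    (h : ∀ j < n, (q.comp (Polynomial.X + Polynomial.C γ)).coeff j = 0) :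
    (Polynomial.X - Polynomial.C γ)^n ∣ q := by
  have h1 : (Polynomial.X)^n ∣ q.comp (Polynomial.X + Polynomial.C γ) :=
    Polynomial.X_pow_dvd_iff.2 h
  obtain ⟨g, hg⟩ := h1
  have hcomp : (Polynomial.X + Polynomial.C γ).comp
      (Polynomial.X - Polynomial.C γ) = Polynomial.X := by
    simp [Polynomial.add_comp]
  have hq : q = ((q.comp (Polynomial.X + Polynomial.C γ)).comp
      (Polynomial.X - Polynomial.C γ)) := by
    rw [Polynomial.comp_assoc, hcomp, Polynomial.comp_X]
  rw [hq, hg, Polynomial.mul_comp, Polynomial.pow_comp, Polynomial.X_comp]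
  exact Dvd.intro _ rfl

variable {ι : Type*} [Fintype ι]

/-- The main divisibility lemma, in one-variable form over `R = ℂ[y]`. -/
lemma poly_dvd_main (N d : ℕ) (A B : ι → ℕ) (u : ι → ℂ) (ζ : ℂ) (hζ : ζ ≠ 0)
    (hAB : ∀ i, A i + B i = d)
    (hζA : ∀ i, ζ ^ (A i) = ζ) (hζB : ∀ i, ζ ^ (B i) = 1)
    (hsum : ∀ j < N, ∑ i, u i * (((A i).choose j : ℂ) - ((B i).choose j : ℂ)) = 0) :
    (Polynomial.X - Polynomial.C (C ζ * X 0))^N ∣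
      ((∑ i, Polynomial.C (C (u i) * (X 0 : MvPolynomial (Fin 1) ℂ) ^ B i)
          * Polynomial.X ^ A i)
        - Polynomial.C (C ζ) * ∑ i, Polynomial.C (C (u i) * (X 0 : MvPolynomial (Fin 1) ℂ) ^ A i)
          * Polynomial.X ^ B i) := by
  set R := MvPolynomial (Fin 1) ℂ
  set Y : R := X 0
  set γ : R := C ζ * Y
  apply dvd_of_comp_coeff
  intro j hj
  have hcomp : (((∑ i, Polynomial.C (C (u i) * Y ^ B i) * Polynomial.X ^ A i)
        - Polynomial.C (C ζ) * ∑ i, Polynomial.C (C (u i) * Y ^ A i) * Polynomial.X ^ B i).comp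
      (Polynomial.X + Polynomial.C γ))
      = (∑ i, Polynomial.C (C (u i) * Y ^ B i) * (Polynomial.X + Polynomial.C γ) ^ A i)
        - Polynomial.C (C ζ) * ∑ i, Polynomial.C (C (u i) * Y ^ A i)
            * (Polynomial.X + Polynomial.C γ) ^ B i := by
    simp [Polynomial.sub_comp, Polynomial.mul_comp, Polynomial.pow_comp, Polynomial.C_comp,
      Polynomial.X_comp, Polynomial.sum_comp]
  rw [hcomp]
  have hCζ : (C ζ : R) ^ j ≠ 0 := by
    rw [← C_pow]
    simpa using pow_ne_zero j hζ
  have hkey : (C ζ : R)^j * (((∑ i, Polynomial.C (C (u i) * Y ^ B i)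
        * (Polynomial.X + Polynomial.C γ) ^ A i)
      - Polynomial.C (C ζ) * ∑ i, Polynomial.C (C (u i) * Y ^ A i)
        * (Polynomial.X + Polynomial.C γ) ^ B i).coeff j) = 0 := by
    rw [Polynomial.coeff_sub, Polynomial.coeff_C_mul, Polynomial.finset_sum_coeff,
      Polynomial.finset_sum_coeff]
    simp only [Polynomial.coeff_C_mul, Polynomial.coeff_X_add_C_pow]
    have hterm1 : ∀ i : ι, (C ζ : R)^j * (C (u i) * Y ^ B i * (γ ^ (A i - j) * ((A i).choose j : R)))
        = (C ζ * Y ^ (d - j)) * (C (u i) * ((A i).choose j : R)) := by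
      intro i
      by_cases hij : j ≤ A i
      · have hBd : B i + (A i - j) = d - j := by have := hAB i; omega
        have : (C ζ : R)^j * γ ^ (A i - j) = C ζ * Y ^ (A i - j) := by
          rw [show γ = C ζ * Y from rfl, mul_pow, ← mul_assoc, ← pow_add, ← C_pow,
            show j + (A i - j) = A i by omega, hζA i]
        calc (C ζ : R)^j * (C (u i) * Y ^ B i * (γ ^ (A i - j) * ((A i).choose j : R)))
            = ((C ζ : R)^j * γ ^ (A i - j)) * (C (u i) * Y ^ B i * ((A i).choose j : R)) := by ring
          _ = (C ζ * Y ^ (d - j)) * (C (u i) * ((A i).choose j : R)) := by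
              rw [this, ← hBd, pow_add]; ring
      · rw [Nat.choose_eq_zero_of_lt (by omega)]
        push_cast
        ring
    have hterm2 : ∀ i : ι, (C ζ : R)^j * (C ζ * (C (u i) * Y ^ A i * (γ ^ (B i - j) * ((B i).choose j : R))))
        = (C ζ * Y ^ (d - j)) * (C (u i) * ((B i).choose j : R)) := by
      intro i
      by_cases hij : j ≤ B i
      · have hAd : A i + (B i - j) = d - j := by have := hAB i; omega
        have : (C ζ : R)^j * γ ^ (B i - j) = Y ^ (B i - j) := by
          rw [show γ = C ζ * Y from rfl, mul_pow, ← mul_assoc, ← pow_add, ← C_pow,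
            show j + (B i - j) = B i by omega, hζB i, C_1, one_mul]
        calc (C ζ : R)^j * (C ζ * (C (u i) * Y ^ A i * (γ ^ (B i - j) * ((B i).choose j : R))))
            = ((C ζ : R)^j * γ ^ (B i - j)) * (C ζ * (C (u i) * Y ^ A i * ((B i).choose j : R))) := by
              ring
          _ = (C ζ * Y ^ (d - j)) * (C (u i) * ((B i).choose j : R)) := by
              rw [this, ← hAd, pow_add]; ring
      · rw [Nat.choose_eq_zero_of_lt (by omega)]
        push_cast
        ring
    have hsplit : (∑ i, C (u i) * Y ^ B i * (γ ^ (A i - j) * ((A i).choose j : R)))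
        - C ζ * ∑ i, C (u i) * Y ^ A i * (γ ^ (B i - j) * ((B i).choose j : R))
        = ∑ i, (C (u i) * Y ^ B i * (γ ^ (A i - j) * ((A i).choose j : R))
            - C ζ * (C (u i) * Y ^ A i * (γ ^ (B i - j) * ((B i).choose j : R)))) := by
      rw [Finset.mul_sum, ← Finset.sum_sub_distrib]
    rw [hsplit, Finset.mul_sum]
    have hc : ∑ i, (C (u i) * (((A i).choose j : R) - ((B i).choose j : R))) = 0 := by
      have hz := hsum j hj
      have hmap := congrArg (C : ℂ → R) hz
      rw [map_sum, map_zero] at hmap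
      rw [← hmap]
      apply Finset.sum_congr rfl
      intro i _
      simp [map_sub, map_mul, map_natCast]
    apply Eq.trans (b := ∑ i, (C ζ * Y ^ (d - j)) * (C (u i)
        * (((A i).choose j : R) - ((B i).choose j : R))))
    · apply Finset.sum_congr rfl
      intro i _
      linear_combination (hterm1 i) - (hterm2 i)
    · rw [← Finset.mul_sum, hc, mul_zero]
  have := mul_eq_zero.1 hkey
  tauto

section MvTransfer


variable {ι : Type*} [Fintype ι]

lemma finSuccEquiv_C' (a : ℂ) :
    MvPolynomial.finSuccEquiv ℂ 1 (C a) = Polynomial.C (C a) := by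
  simp [MvPolynomial.finSuccEquiv_apply]

lemma finSuccEquiv_X1 :
    MvPolynomial.finSuccEquiv ℂ 1 (X 1 : PolyS 2) = Polynomial.C (X 0) := by
  have : (1 : Fin 2) = Fin.succ 0 := rfl
  rw [this, finSuccEquiv_X_succ]

lemma mv_dvd_main (N d : ℕ) (A B : ι → ℕ) (u : ι → ℂ) (ζ : ℂ) (hζ : ζ ≠ 0)
    (hAB : ∀ i, A i + B i = d)
    (hζA : ∀ i, ζ ^ (A i) = ζ) (hζB : ∀ i, ζ ^ (B i) = 1)
    (hsum : ∀ j < N, ∑ i, u i * (((A i).choose j : ℂ) - ((B i).choose j : ℂ)) = 0) :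
    ((X 0 : PolyS 2) - C ζ * X 1)^N ∣
      (∑ i, C (u i) * (X 0 ^ A i * X 1 ^ B i))
        - C ζ * ∑ i, C (u i) * (X 0 ^ B i * X 1 ^ A i) := by
  set φ := MvPolynomial.finSuccEquiv ℂ 1 with hφ
  have key := poly_dvd_main N d A B u ζ hζ hAB hζA hζB hsum
  have himg : φ (((X 0 : PolyS 2) - C ζ * X 1)^N)
      = (Polynomial.X - Polynomial.C (C ζ * X 0))^N := by
    rw [map_pow, map_sub, map_mul, finSuccEquiv_C', finSuccEquiv_X1, finSuccEquiv_X_zero,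
      ← Polynomial.C_mul]
  have himg2 : φ ((∑ i, C (u i) * (X 0 ^ A i * X 1 ^ B i))
        - C ζ * ∑ i, C (u i) * (X 0 ^ B i * X 1 ^ A i))
      = ((∑ i, Polynomial.C (C (u i) * (X 0 : MvPolynomial (Fin 1) ℂ) ^ B i)
          * Polynomial.X ^ A i)
        - Polynomial.C (C ζ) * ∑ i, Polynomial.C (C (u i)
            * (X 0 : MvPolynomial (Fin 1) ℂ) ^ A i) * Polynomial.X ^ B i) := by
    rw [map_sub, map_mul, map_sum, map_sum, finSuccEquiv_C']
    congr 1
    · apply Finset.sum_congr rfl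
      intro i _
      rw [map_mul, map_mul, map_pow, map_pow, finSuccEquiv_C', finSuccEquiv_X1,
        finSuccEquiv_X_zero, ← Polynomial.C_pow, Polynomial.C_mul]
      ring
    · congr 1
      apply Finset.sum_congr rfl
      intro i _
      rw [map_mul, map_mul, map_pow, map_pow, finSuccEquiv_C', finSuccEquiv_X1,
        finSuccEquiv_X_zero, ← Polynomial.C_pow, Polynomial.C_mul]
      ring
  rw [← himg, ← himg2] at key
  obtain ⟨c, hc⟩ := key
  exact ⟨φ.symm c, by
    apply φ.injective
    rw [map_mul, hc, AlgEquiv.apply_symm_apply]⟩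

end MvTransfer



end ZPart
section AppPart
variable (r m k : ℕ)

/-- exponents -/
def An (i : Fin (m+1)) : ℕ := k*r+1 + r*(i:ℕ)
def B1 (i : Fin (m+1)) : ℕ := r*(m-(i:ℕ))
def B2 (i : Fin (m+1)) : ℕ := r*(m-(i:ℕ)) + r

def w1 : ℤ := (k:ℤ) - m
def w2 : ℤ := (k:ℤ) - m - 1

def q1 : MvPolynomial (Fin 2) ℤ :=
  ∑ i : Fin (m+1), MvPolynomial.C (cz m r (w1 m k) i) * X 0 ^ (i:ℕ) * X 1 ^ (m - (i:ℕ))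
def q2 : MvPolynomial (Fin 2) ℤ :=
  ∑ i : Fin (m+1), MvPolynomial.C (cz m r (w2 m k) i) * X 0 ^ (i:ℕ) * X 1 ^ (m - (i:ℕ))

def u1 (i : Fin (m+1)) : ℂ := ((cz m r (w1 m k) i : ℤ) : ℂ)
def u2 (i : Fin (m+1)) : ℂ := ((cz m r (w2 m k) i : ℤ) : ℂ)

lemma hE1 (i : Fin (m+1)) : (An r m k i : ℤ) - (B1 r m i : ℤ) = Ev m r (w1 m k) i := by
  have him : (i:ℕ) ≤ m := Nat.lt_succ_iff.1 i.isLt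
  unfold An B1 Ev w1
  push_cast [Nat.cast_sub him]
  ring

lemma hE2 (i : Fin (m+1)) : (An r m k i : ℤ) - (B2 r m i : ℤ) = Ev m r (w2 m k) i := by
  have him : (i:ℕ) ≤ m := Nat.lt_succ_iff.1 i.isLt
  unfold An B2 Ev w2
  push_cast [Nat.cast_sub him]
  ring

lemma hS1 (i : Fin (m+1)) : (An r m k i : ℤ) + (B1 r m i : ℤ) = (k:ℤ)*r+1 + r*m := by
  have him : (i:ℕ) ≤ m := Nat.lt_succ_iff.1 i.isLt
  unfold An B1
  push_cast [Nat.cast_sub him]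
  ring

lemma hS2 (i : Fin (m+1)) : (An r m k i : ℤ) + (B2 r m i : ℤ) = (k:ℤ)*r+1 + r*m + r := by
  have him : (i:ℕ) ≤ m := Nat.lt_succ_iff.1 i.isLt
  unfold An B2
  push_cast [Nat.cast_sub him]
  ring

lemma hAB1 (i : Fin (m+1)) : An r m k i + B1 r m i = k*r+1 + r*m := by
  have := hS1 r m k i
  exact_mod_cast this

lemma hAB2 (i : Fin (m+1)) : An r m k i + B2 r m i = k*r+1 + r*m + r := by
  have := hS2 r m k i
  exact_mod_cast this

variable {r m k : ℕ} (hr : 2 ≤ r) (hm : 1 ≤ m)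
include hr

lemma hsum1 : ∀ j < 2*m+1,
    ∑ i : Fin (m+1), u1 r m k i * (((An r m k i).choose j : ℂ) - ((B1 r m i).choose j : ℂ)) = 0 := by
  intro j hj
  have hz := sum_choose (m := m) (r := r) (w := w1 m k) (An r m k) (B1 r m)
    ((k:ℤ)*r+1 + r*m) (hE1 r m k) (hS1 r m k) j (by omega)
  unfold u1
  exact_mod_cast hz

lemma hsum2 : ∀ j < 2*m+1,
    ∑ i : Fin (m+1), u2 r m k i * (((An r m k i).choose j : ℂ) - ((B2 r m i).choose j : ℂ)) = 0 := by
  intro j hj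
  have hz := sum_choose (m := m) (r := r) (w := w2 m k) (An r m k) (B2 r m)
    ((k:ℤ)*r+1 + r*m + r) (hE2 r m k) (hS2 r m k) j (by omega)
  unfold u2
  exact_mod_cast hz

lemma u1_ne_zero (i : Fin (m+1)) : u1 r m k i ≠ 0 := by
  unfold u1
  exact_mod_cast cz_ne_zero m r (w1 m k) hr i

lemma u2_ne_zero (i : Fin (m+1)) : u2 r m k i ≠ 0 := by
  unfold u2
  exact_mod_cast cz_ne_zero m r (w2 m k) hr i


omit hr

/-- q-polynomials are homogeneous of degree `m`. -/
lemma q_homog (c : Fin (m+1) → ℤ) :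
    (∑ i : Fin (m+1), MvPolynomial.C (c i) * X 0 ^ (i:ℕ) * X 1 ^ (m - (i:ℕ))
      : MvPolynomial (Fin 2) ℤ).IsHomogeneous m := by
  apply IsHomogeneous.sum
  intro i _
  have him : (i:ℕ) ≤ m := Nat.lt_succ_iff.1 i.isLt
  have h1 : (MvPolynomial.C (c i) * X 0 ^ (i:ℕ) * X 1 ^ (m - (i:ℕ))
      : MvPolynomial (Fin 2) ℤ).IsHomogeneous (0 + (i:ℕ) + (m - (i:ℕ))) :=
    (((isHomogeneous_C _ _).mul (isHomogeneous_X_pow _ _)).mul (isHomogeneous_X_pow _ _))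
  have : 0 + (i:ℕ) + (m - (i:ℕ)) = m := by omega
  rwa [this] at h1

lemma term_monomial (c : ℤ) (p q : ℕ) :
    (MvPolynomial.C c * X 0 ^ p * X 1 ^ q : MvPolynomial (Fin 2) ℤ)
      = monomial (Finsupp.single 0 p + Finsupp.single 1 q) c := by
  rw [C_apply, X_pow_eq_monomial, X_pow_eq_monomial, monomial_mul, monomial_mul]
  simp

lemma single_pair_eq_iff {p q p' q' : ℕ} :
    (Finsupp.single (0:Fin 2) p + Finsupp.single 1 q
      = Finsupp.single (0:Fin 2) p' + Finsupp.single 1 q') ↔ (p = p' ∧ q = q') := by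
  constructor
  · intro h
    have h0 := DFunLike.congr_fun h 0
    have h1 := DFunLike.congr_fun h 1
    simp [Finsupp.single_apply] at h0 h1
    exact ⟨h0, h1⟩
  · rintro ⟨rfl, rfl⟩; rfl

lemma q_coeff_x (c : Fin (m+1) → ℤ) :
    MvPolynomial.coeff (Finsupp.single (0 : Fin 2) m)
      (∑ i : Fin (m+1), MvPolynomial.C (c i) * X 0 ^ (i:ℕ) * X 1 ^ (m - (i:ℕ))
        : MvPolynomial (Fin 2) ℤ) = c (Fin.last m) := by
  rw [MvPolynomial.coeff_sum]
  rw [Finset.sum_eq_single (Fin.last m)]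
  · rw [term_monomial, coeff_monomial]
    have : Finsupp.single (0:Fin 2) ((Fin.last m : ℕ)) + Finsupp.single 1 (m - (Fin.last m : ℕ))
        = Finsupp.single (0:Fin 2) m := by
      simp [Fin.val_last]
    rw [if_pos this]
  · intro i _ hne
    rw [term_monomial, coeff_monomial, if_neg]
    intro hcontra
    have him : (i:ℕ) ≤ m := Nat.lt_succ_iff.1 i.isLt
    have : Finsupp.single (0:Fin 2) m = Finsupp.single (0:Fin 2) m + Finsupp.single 1 0 := by simp
    rw [this] at hcontra
    obtain ⟨h1, h2⟩ := single_pair_eq_iff.1 hcontra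
    exact hne (by
      apply Fin.ext
      simp [Fin.val_last, h1])
  · intro h
    exact absurd (Finset.mem_univ _) h

lemma q_coeff_y (c : Fin (m+1) → ℤ) :
    MvPolynomial.coeff (Finsupp.single (1 : Fin 2) m)
      (∑ i : Fin (m+1), MvPolynomial.C (c i) * X 0 ^ (i:ℕ) * X 1 ^ (m - (i:ℕ))
        : MvPolynomial (Fin 2) ℤ) = c 0 := by
  rw [MvPolynomial.coeff_sum]
  rw [Finset.sum_eq_single (0 : Fin (m+1))]
  · rw [term_monomial, coeff_monomial]
    have : Finsupp.single (0:Fin 2) ((0 : Fin (m+1)) : ℕ)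
        + Finsupp.single (1:Fin 2) (m - ((0 : Fin (m+1)):ℕ)) = Finsupp.single (1:Fin 2) m := by
      simp
    rw [if_pos this]
  · intro i _ hne
    rw [term_monomial, coeff_monomial, if_neg]
    intro hcontra
    have : Finsupp.single (1:Fin 2) m = Finsupp.single (0:Fin 2) 0 + Finsupp.single 1 m := by simp
    rw [this] at hcontra
    obtain ⟨h1, h2⟩ := single_pair_eq_iff.1 hcontra
    exact hne (by
      apply Fin.ext
      simp [h1])
  · intro h
    exact absurd (Finset.mem_univ _) h

lemma aeval_q_expand (c : Fin (m+1) → ℤ) (f g : PolyS 2) :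
    (MvPolynomial.aeval ![f, g]
      (∑ i : Fin (m+1), MvPolynomial.C (c i) * X 0 ^ (i:ℕ) * X 1 ^ (m - (i:ℕ))
        : MvPolynomial (Fin 2) ℤ))
      = ∑ i : Fin (m+1), C ((c i : ℂ)) * (f ^ (i:ℕ) * g ^ (m - (i:ℕ))) := by
  rw [map_sum]
  apply Finset.sum_congr rfl
  intro i _
  rw [map_mul, map_mul, map_pow, map_pow, aeval_X, aeval_X, aeval_C]
  have : (algebraMap ℤ (PolyS 2)) (c i) = C ((c i : ℂ)) := by
    rw [Subsingleton.elim (algebraMap ℤ (PolyS 2)) (Int.castRingHom _)]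
    simp only [eq_intCast]
    rw [← map_intCast (C : ℂ →+* PolyS 2)]
  rw [this]
  simp [mul_assoc]

section Theta

variable (r m k : ℕ)

def T1x : PolyS 2 := X 0 ^ (k*r+1) * MvPolynomial.aeval ![(X 0 : PolyS 2) ^ r, X 1 ^ r] (q1 r m k)
def T1y : PolyS 2 := X 1 ^ (k*r+1) * MvPolynomial.aeval ![(X 1 : PolyS 2) ^ r, X 0 ^ r] (q1 r m k)
def T2x : PolyS 2 := X 0 ^ (k*r+1) * X 1 ^ r
  * MvPolynomial.aeval ![(X 0 : PolyS 2) ^ r, X 1 ^ r] (q2 r m k)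
def T2y : PolyS 2 := X 1 ^ (k*r+1) * X 0 ^ r
  * MvPolynomial.aeval ![(X 1 : PolyS 2) ^ r, X 0 ^ r] (q2 r m k)

lemma T1x_eq : T1x r m k
    = ∑ i : Fin (m+1), C (u1 r m k i) * ((X 0 : PolyS 2) ^ (An r m k i) * X 1 ^ (B1 r m i)) := by
  unfold T1x q1
  rw [aeval_q_expand, Finset.mul_sum]
  apply Finset.sum_congr rfl
  intro i _
  unfold An B1 u1
  rw [← pow_mul, ← pow_mul]
  ring

lemma T1y_eq : T1y r m k
    = ∑ i : Fin (m+1), C (u1 r m k i) * ((X 0 : PolyS 2) ^ (B1 r m i) * X 1 ^ (An r m k i)) := by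
  unfold T1y q1
  rw [aeval_q_expand, Finset.mul_sum]
  apply Finset.sum_congr rfl
  intro i _
  unfold An B1 u1
  rw [← pow_mul, ← pow_mul]
  ring

lemma T2x_eq : T2x r m k
    = ∑ i : Fin (m+1), C (u2 r m k i) * ((X 0 : PolyS 2) ^ (An r m k i) * X 1 ^ (B2 r m i)) := by
  unfold T2x q2
  rw [aeval_q_expand, Finset.mul_sum]
  apply Finset.sum_congr rfl
  intro i _
  unfold An B2 u2
  rw [← pow_mul, ← pow_mul]
  ring

lemma T2y_eq : T2y r m k
    = ∑ i : Fin (m+1), C (u2 r m k i) * ((X 0 : PolyS 2) ^ (B2 r m i) * X 1 ^ (An r m k i)) := by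
  unfold T2y q2
  rw [aeval_q_expand, Finset.mul_sum]
  apply Finset.sum_congr rfl
  intro i _
  unfold An B2 u2
  rw [← pow_mul, ← pow_mul]
  ring

variable {r m k}

lemma zeta_ne_zero {ζ : ℂ} (hr : 2 ≤ r) (hζ : ζ ^ r = 1) : ζ ≠ 0 := by
  intro h
  rw [h, zero_pow (by omega)] at hζ
  exact zero_ne_one hζ

lemma zeta_pow_An {ζ : ℂ} (hζ : ζ ^ r = 1) (i : Fin (m+1)) : ζ ^ (An r m k i) = ζ := by
  have : An r m k i = r * (k + (i:ℕ)) + 1 := by unfold An; ring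
  rw [this, pow_add, pow_mul, hζ, one_pow, one_mul, pow_one]

lemma zeta_pow_B1 {ζ : ℂ} (hζ : ζ ^ r = 1) (i : Fin (m+1)) : ζ ^ (B1 r m i) = 1 := by
  unfold B1
  rw [pow_mul, hζ, one_pow]

lemma zeta_pow_B2 {ζ : ℂ} (hζ : ζ ^ r = 1) (i : Fin (m+1)) : ζ ^ (B2 r m i) = 1 := by
  have : B2 r m i = r * (m - (i:ℕ) + 1) := by unfold B2; ring
  rw [this, pow_mul, hζ, one_pow]

/-- Applying a derivation to `X 0 - C ζ * X 1`. -/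
lemma deriv_apply_lin (η : Derivation ℂ (PolyS 2) (PolyS 2)) (ζ : ℂ) :
    η ((X 0 : PolyS 2) - C ζ * X 1) = η (X 0) - C ζ * η (X 1) := by
  rw [Derivation.map_sub, ← smul_eq_C_mul, Derivation.map_smul, smul_eq_C_mul]

lemma fin2_lt {i j : Fin 2} (hij : i < j) : i = 0 ∧ j = 1 := by
  constructor <;> [apply Fin.ext; apply Fin.ext] <;> omega

lemma theta1_inDeriv (hr : 2 ≤ r) :
    InDeriv r ![k*r+1, k*r+1] (2*m+1)
      (MvPolynomial.mkDerivation ℂ ![T1x r m k, T1y r m k]) := by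
  constructor
  · intro i
    fin_cases i
    · rw [mkDerivation_X]
      apply Ideal.mem_span_singleton.2
      simp only [Matrix.cons_val_zero]
      exact dvd_mul_right _ _
    · rw [mkDerivation_X]
      apply Ideal.mem_span_singleton.2
      simp only [Matrix.cons_val_one, Matrix.head_cons]
      exact dvd_mul_right _ _
  · intro i j hij ζ hζ
    obtain ⟨rfl, rfl⟩ := fin2_lt hij
    rw [deriv_apply_lin, mkDerivation_X, mkDerivation_X]
    apply Ideal.mem_span_singleton.2
    simp only [Matrix.cons_val_zero, Matrix.cons_val_one, Matrix.head_cons]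
    rw [T1x_eq, T1y_eq]
    exact mv_dvd_main (2*m+1) (k*r+1 + r*m) (An r m k) (B1 r m) (u1 r m k) ζ
      (zeta_ne_zero hr hζ) (hAB1 r m k) (fun i => zeta_pow_An hζ i)
      (fun i => zeta_pow_B1 hζ i) (hsum1 hr)

lemma theta2_inDeriv (hr : 2 ≤ r) :
    InDeriv r ![k*r+1, k*r+1] (2*m+1)
      (MvPolynomial.mkDerivation ℂ ![T2x r m k, T2y r m k]) := by
  constructor
  · intro i
    fin_cases i
    · rw [mkDerivation_X]
      apply Ideal.mem_span_singleton.2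
      simp only [Matrix.cons_val_zero]
      unfold T2x
      exact dvd_mul_of_dvd_left (dvd_mul_right _ _) _
    · rw [mkDerivation_X]
      apply Ideal.mem_span_singleton.2
      simp only [Matrix.cons_val_one, Matrix.head_cons]
      unfold T2y
      exact dvd_mul_of_dvd_left (dvd_mul_right _ _) _
  · intro i j hij ζ hζ
    obtain ⟨rfl, rfl⟩ := fin2_lt hij
    rw [deriv_apply_lin, mkDerivation_X, mkDerivation_X]
    apply Ideal.mem_span_singleton.2
    simp only [Matrix.cons_val_zero, Matrix.cons_val_one, Matrix.head_cons]
    rw [T2x_eq, T2y_eq]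
    exact mv_dvd_main (2*m+1) (k*r+1 + r*m + r) (An r m k) (B2 r m) (u2 r m k) ζ
      (zeta_ne_zero hr hζ) (hAB2 r m k) (fun i => zeta_pow_An hζ i)
      (fun i => zeta_pow_B2 hζ i) (hsum2 hr)

end Theta

section RelPrime

lemma prime_X0 : Prime (X 0 : PolyS 2) := by
  set e := (MvPolynomial.finSuccEquiv ℂ 1).toRingEquiv.toMulEquiv with he
  apply (MulEquiv.prime_iff e).mp
  have h0 : e (X 0 : PolyS 2) = MvPolynomial.finSuccEquiv ℂ 1 (X 0) := rfl
  rw [h0, finSuccEquiv_X_zero]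
  exact Polynomial.prime_X

lemma unit_of_dvd_X0_X1 {d : PolyS 2} (h0 : d ∣ X 0) (h1 : d ∣ X 1) : IsUnit d := by
  obtain ⟨e, he⟩ := h0
  rcases prime_X0.irreducible.isUnit_or_isUnit he with hu | hu
  · exact hu
  · exfalso
    obtain ⟨v, rfl⟩ := hu
    have hd : d = X 0 * ((v⁻¹ : (PolyS 2)ˣ) : PolyS 2) := by
      rw [he, mul_assoc, Units.mul_inv, mul_one]
    have hX01 : (X 0 : PolyS 2) ∣ X 1 := dvd_trans ⟨_, hd⟩ h1
    obtain ⟨g, hg⟩ := hX01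
    have := congrArg (MvPolynomial.eval ![0, 1]) hg
    simp at this

lemma unit_of_dvd_X0_L {ζ : ℂ} (hζ : ζ ≠ 0) {d : PolyS 2}
    (h0 : d ∣ X 0) (hL : d ∣ (X 0 - C ζ * X 1)) : IsUnit d := by
  have h2 : d ∣ C ζ * X 1 := by
    have := dvd_sub h0 hL
    rwa [show (X 0 : PolyS 2) - (X 0 - C ζ * X 1) = C ζ * X 1 by ring] at this
  have h3 : d ∣ (X 1 : PolyS 2) := by
    have := h2.mul_left (C ζ⁻¹)
    rwa [← mul_assoc, ← C_mul, inv_mul_cancel₀ hζ, C_1, one_mul] at this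
  exact unit_of_dvd_X0_X1 h0 h3

lemma unit_of_dvd_X1_L {ζ : ℂ} {d : PolyS 2}
    (h1 : d ∣ X 1) (hL : d ∣ (X 0 - C ζ * X 1)) : IsUnit d := by
  have h0 : d ∣ (X 0 : PolyS 2) := by
    have := dvd_add hL (h1.mul_left (C ζ))
    rwa [show (X 0 : PolyS 2) - C ζ * X 1 + C ζ * X 1 = X 0 by ring] at this
  exact unit_of_dvd_X0_X1 h0 h1

lemma unit_of_dvd_L_L {ζ ζ' : ℂ} (hne : ζ ≠ ζ') {d : PolyS 2}
    (hL : d ∣ (X 0 - C ζ * X 1)) (hL' : d ∣ (X 0 - C ζ' * X 1)) : IsUnit d := by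
  have h2 : d ∣ C (ζ' - ζ) * X 1 := by
    have := dvd_sub hL' hL
    rwa [show (X 0 : PolyS 2) - C ζ' * X 1 - (X 0 - C ζ * X 1) = C (ζ - ζ') * X 1 by
      rw [C_sub]; ring, show (ζ:ℂ) - ζ' = -(ζ' - ζ) by ring, map_neg, neg_mul, dvd_neg] at this
  have h3 : d ∣ (X 1 : PolyS 2) := by
    have := h2.mul_left (C (ζ' - ζ)⁻¹)
    rwa [← mul_assoc, ← C_mul, inv_mul_cancel₀ (sub_ne_zero.2 (Ne.symm hne)), C_1, one_mul] at this
  exact unit_of_dvd_X1_L h3 hL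

lemma Q_dvd_of (a n : ℕ) (s : Finset ℂ) (hs : ∀ ζ ∈ s, ζ ≠ 0) (F : PolyS 2)
    (h0 : (X 0 : PolyS 2)^a ∣ F) (h1 : (X 1 : PolyS 2)^a ∣ F)
    (hL : ∀ ζ ∈ s, ((X 0 : PolyS 2) - C ζ * X 1)^n ∣ F) :
    (X 0 : PolyS 2)^a * (X 1 : PolyS 2)^a * ∏ ζ ∈ s, ((X 0 : PolyS 2) - C ζ * X 1)^n ∣ F := by
  classical
  have hprod : (∏ ζ ∈ s, ((X 0 : PolyS 2) - C ζ * X 1)^n) ∣ F := by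
    induction s using Finset.induction with
    | empty => simpa using one_dvd F
    | @insert ζ s' hnotmem ih =>
        rw [Finset.prod_insert hnotmem]
        apply IsRelPrime.mul_dvd
        · apply IsRelPrime.prod_right
          intro ζ' hζ'
          have hne : ζ ≠ ζ' := fun h => hnotmem (h ▸ hζ')
          exact IsRelPrime.pow (fun d hd hd' => unit_of_dvd_L_L hne hd hd')
        · exact hL ζ (Finset.mem_insert_self _ _)
        · exact ih (fun ζ' h => hs _ (Finset.mem_insert_of_mem h))
            (fun ζ' h => hL _ (Finset.mem_insert_of_mem h))
  have rp1 : IsRelPrime ((X 0 : PolyS 2)^a) (∏ ζ ∈ s, ((X 0 : PolyS 2) - C ζ * X 1)^n) :=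
    IsRelPrime.prod_right fun ζ hζ =>
      IsRelPrime.pow (fun d hd hd' => unit_of_dvd_X0_L (hs ζ hζ) hd hd')
  have rp2 : IsRelPrime ((X 1 : PolyS 2)^a) (∏ ζ ∈ s, ((X 0 : PolyS 2) - C ζ * X 1)^n) :=
    IsRelPrime.prod_right fun ζ hζ =>
      IsRelPrime.pow (fun d hd hd' => unit_of_dvd_X1_L hd hd')
  have rp12 : IsRelPrime ((X 0 : PolyS 2)^a) ((X 1 : PolyS 2)^a) :=
    IsRelPrime.pow (fun d hd hd' => unit_of_dvd_X0_X1 hd hd')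
  exact (rp1.mul_left rp2).mul_dvd (rp12.mul_dvd h0 h1) hprod

end RelPrime

section ConstQuot

/-- If a homogeneous `Q` divides a homogeneous `P` of the same degree, the quotient is
a constant. -/
lemma eq_C_mul_of_dvd_homog {P Q : PolyS 2} {N : ℕ} (hQ : Q.IsHomogeneous N)
    (hP : P.IsHomogeneous N) (hdvd : Q ∣ P) : ∃ c : ℂ, P = C c * Q := by
  obtain ⟨g, rfl⟩ := hdvd
  refine ⟨MvPolynomial.coeff 0 g, ?_⟩
  have key : ∀ t ∈ Finset.range (g.totalDegree + 1), t ≠ 0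
      → Q * homogeneousComponent t g = 0 := by
    intro t _ ht
    have expand : Q * g
        = ∑ s ∈ Finset.range (g.totalDegree + 1), Q * homogeneousComponent s g := by
      rw [← Finset.mul_sum, sum_homogeneousComponent]
    have happ := congrArg (⇑(homogeneousComponent (N + t))) expand
    rw [map_sum] at happ
    have hL : homogeneousComponent (N + t) (Q * g) = 0 := by
      rw [homogeneousComponent_of_mem ((mem_homogeneousSubmodule _ _).2 hP)]
      rw [if_neg (show ¬ (N + t = N) by omega)]
    rw [hL] at happ
    have hterm : ∀ s ∈ Finset.range (g.totalDegree + 1), s ≠ t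
        → homogeneousComponent (N + t) (Q * homogeneousComponent s g) = 0 := by
      intro s _ hst
      have hhom : (Q * homogeneousComponent s g).IsHomogeneous (N + s) :=
        hQ.mul (homogeneousComponent_isHomogeneous s g)
      rw [homogeneousComponent_of_mem ((mem_homogeneousSubmodule _ _).2 hhom)]
      rw [if_neg (show ¬ (N + t = N + s) by omega)]
    by_cases htr : t ∈ Finset.range (g.totalDegree + 1)
    · have := Finset.sum_eq_single_of_mem t htr hterm
      rw [this] at happ
      have hhomt : (Q * homogeneousComponent t g).IsHomogeneous (N + t) :=
        hQ.mul (homogeneousComponent_isHomogeneous t g)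
      rw [homogeneousComponent_of_mem ((mem_homogeneousSubmodule _ _).2 hhomt),
        if_pos rfl] at happ
      exact happ.symm
    · rw [homogeneousComponent_eq_zero _ g (by
        simp only [Finset.mem_range, not_lt] at htr; omega), mul_zero]
  calc Q * g = ∑ s ∈ Finset.range (g.totalDegree + 1), Q * homogeneousComponent s g := by
        rw [← Finset.mul_sum, sum_homogeneousComponent]
    _ = Q * homogeneousComponent 0 g := by
        apply Finset.sum_eq_single_of_mem 0 (Finset.mem_range.2 (by omega))
        intro s hs hs0
        exact key s hs hs0
    _ = C (MvPolynomial.coeff 0 g) * Q := by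
        rw [homogeneousComponent_zero, mul_comm]

end ConstQuot

section Saito

variable (r m k : ℕ)

def Qpoly : PolyS 2 := (X 0)^(k*r+1) * (X 1)^(k*r+1)
  * ∏ ζ ∈ Polynomial.nthRootsFinset r (1 : ℂ), ((X 0 : PolyS 2) - C ζ * X 1)^(2*m+1)

def DT : PolyS 2 := T1x r m k * T2y r m k - T1y r m k * T2x r m k

lemma homog_sum (u : Fin (m+1) → ℂ) (A B : Fin (m+1) → ℕ) (d : ℕ) (hAB : ∀ i, A i + B i = d) :
    (∑ i : Fin (m+1), C (u i) * ((X 0 : PolyS 2) ^ (A i) * X 1 ^ (B i))).IsHomogeneous d := by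
  apply IsHomogeneous.sum
  intro i _
  have h := (isHomogeneous_C (Fin 2) (u i)).mul
    ((isHomogeneous_X_pow (R := ℂ) (0 : Fin 2) (A i)).mul (isHomogeneous_X_pow 1 (B i)))
  rw [show 0 + (A i + B i) = d by rw [zero_add, hAB i]] at h
  exact h

lemma T1x_homog : (T1x r m k).IsHomogeneous (k*r+1 + r*m) := by
  rw [T1x_eq]; exact homog_sum (m := m) _ _ _ _ (hAB1 r m k)

lemma T1y_homog : (T1y r m k).IsHomogeneous (k*r+1 + r*m) := by
  rw [T1y_eq]
  exact homog_sum (m := m) _ _ _ _ (fun i => by rw [Nat.add_comm]; exact hAB1 r m k i)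

lemma T2x_homog : (T2x r m k).IsHomogeneous (k*r+1 + r*m + r) := by
  rw [T2x_eq]; exact homog_sum (m := m) _ _ _ _ (hAB2 r m k)

lemma T2y_homog : (T2y r m k).IsHomogeneous (k*r+1 + r*m + r) := by
  rw [T2y_eq]
  exact homog_sum (m := m) _ _ _ _ (fun i => by rw [Nat.add_comm]; exact hAB2 r m k i)

lemma DT_homog : (DT r m k).IsHomogeneous ((k*r+1 + r*m) + (k*r+1 + r*m + r)) := by
  unfold DT
  apply IsHomogeneous.sub
  · exact (T1x_homog r m k).mul (T2y_homog r m k)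
  · exact (T1y_homog r m k).mul (T2x_homog r m k)

variable {r}

lemma Qpoly_homog (hr : 2 ≤ r) :
    (Qpoly r m k).IsHomogeneous ((k*r+1 + r*m) + (k*r+1 + r*m + r)) := by
  have hr0 : r ≠ 0 := by omega
  have hζ₀ := Complex.isPrimitiveRoot_exp r hr0
  have hcard : (Polynomial.nthRootsFinset r (1 : ℂ)).card = r := hζ₀.card_nthRootsFinset
  have hprod : (∏ ζ ∈ Polynomial.nthRootsFinset r (1 : ℂ),
      ((X 0 : PolyS 2) - C ζ * X 1)^(2*m+1)).IsHomogeneous (r * (2*m+1)) := by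
    have h := IsHomogeneous.prod (Polynomial.nthRootsFinset r (1 : ℂ))
      (fun ζ => ((X 0 : PolyS 2) - C ζ * X 1)^(2*m+1)) (fun _ => 2*m+1)
      (fun ζ _ => by
        show ((X 0 - C ζ * X 1 : PolyS 2) ^ (2*m+1)).IsHomogeneous (2*m+1)
        have hlin : ((X 0 : PolyS 2) - C ζ * X 1).IsHomogeneous 1 :=
          (isHomogeneous_X _ _).sub ((isHomogeneous_X _ _).C_mul ζ)
        simpa using hlin.pow (2*m+1))
    rwa [Finset.sum_const, hcard, smul_eq_mul] at h
  have h := ((isHomogeneous_X_pow (R := ℂ) (0 : Fin 2) (k*r+1)).mul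
    (isHomogeneous_X_pow 1 (k*r+1))).mul hprod
  have heq : (k*r+1) + (k*r+1) + r * (2*m+1) = (k*r+1 + r*m) + (k*r+1 + r*m + r) := by ring
  rwa [heq] at h

/-- `T1` satisfies the root-of-unity divisibility. -/
lemma T1_L (hr : 2 ≤ r) {ζ : ℂ} (hζ : ζ ^ r = 1) :
    ((X 0 : PolyS 2) - C ζ * X 1)^(2*m+1) ∣ T1x r m k - C ζ * T1y r m k := by
  rw [T1x_eq, T1y_eq]
  exact mv_dvd_main (2*m+1) (k*r+1 + r*m) (An r m k) (B1 r m) (u1 r m k) ζ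
    (zeta_ne_zero hr hζ) (hAB1 r m k) (fun i => zeta_pow_An hζ i)
    (fun i => zeta_pow_B1 hζ i) (hsum1 hr)

lemma T2_L (hr : 2 ≤ r) {ζ : ℂ} (hζ : ζ ^ r = 1) :
    ((X 0 : PolyS 2) - C ζ * X 1)^(2*m+1) ∣ T2x r m k - C ζ * T2y r m k := by
  rw [T2x_eq, T2y_eq]
  exact mv_dvd_main (2*m+1) (k*r+1 + r*m + r) (An r m k) (B2 r m) (u2 r m k) ζ
    (zeta_ne_zero hr hζ) (hAB2 r m k) (fun i => zeta_pow_An hζ i)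
    (fun i => zeta_pow_B2 hζ i) (hsum2 hr)

/-- The determinant of two members of `D(A,μ)` is divisible by `Qpoly`. -/
lemma Qpoly_dvd_det (hr : 2 ≤ r) (Ax Ay Bx By : PolyS 2)
    (hA0 : (X 0 : PolyS 2)^(k*r+1) ∣ Ax) (hA1 : (X 1 : PolyS 2)^(k*r+1) ∣ Ay)
    (hB0 : (X 0 : PolyS 2)^(k*r+1) ∣ Bx) (hB1 : (X 1 : PolyS 2)^(k*r+1) ∣ By)
    (hAL : ∀ ζ : ℂ, ζ ^ r = 1 →
      ((X 0 : PolyS 2) - C ζ * X 1)^(2*m+1) ∣ Ax - C ζ * Ay)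
    (hBL : ∀ ζ : ℂ, ζ ^ r = 1 →
      ((X 0 : PolyS 2) - C ζ * X 1)^(2*m+1) ∣ Bx - C ζ * By) :
    Qpoly r m k ∣ Ax * By - Ay * Bx := by
  have hr0 : 0 < r := by omega
  apply Q_dvd_of
  · intro ζ hζ
    exact zeta_ne_zero hr ((Polynomial.mem_nthRootsFinset hr0 (1 : ℂ)).1 hζ)
  · exact dvd_sub (dvd_mul_of_dvd_left hA0 _) (hB0.mul_left _)
  · exact dvd_sub (hB1.mul_left _) (dvd_mul_of_dvd_left hA1 _)
  · intro ζ hζ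
    have hζr : ζ ^ r = 1 := (Polynomial.mem_nthRootsFinset hr0 (1 : ℂ)).1 hζ
    have hid : Ax * By - Ay * Bx
        = (Ax - C ζ * Ay) * By - Ay * (Bx - C ζ * By) := by ring
    rw [hid]
    exact dvd_sub ((hAL ζ hζr).mul_right _) ((hBL ζ hζr).mul_left _)

section DTne

variable (r m k : ℕ)

lemma termC_monomial (u : ℂ) (p q : ℕ) :
    (C u * ((X 0:PolyS 2) ^ p * X 1 ^ q))
      = monomial (Finsupp.single 0 p + Finsupp.single 1 q) u := by
  rw [C_apply, X_pow_eq_monomial, X_pow_eq_monomial, monomial_mul, monomial_mul]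
  simp

lemma coeff_prod_term (u v : ℂ) (p q p' q' P Q : ℕ) :
    MvPolynomial.coeff (Finsupp.single (0:Fin 2) P + Finsupp.single 1 Q)
      ((C u * ((X 0:PolyS 2) ^ p * X 1 ^ q)) * (C v * ((X 0:PolyS 2) ^ p' * X 1 ^ q')))
      = if p + p' = P ∧ q + q' = Q then u * v else 0 := by
  have h1 : (C u * ((X 0:PolyS 2) ^ p * X 1 ^ q)) * (C v * ((X 0:PolyS 2) ^ p' * X 1 ^ q'))
      = C (u*v) * ((X 0:PolyS 2) ^ (p+p') * X 1 ^ (q+q')) := by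
    rw [C_mul, pow_add, pow_add]; ring
  rw [h1, termC_monomial, coeff_monomial]
  by_cases h : p + p' = P ∧ q + q' = Q
  · rw [if_pos h, if_pos (single_pair_eq_iff.2 h)]
  · rw [if_neg h, if_neg (fun hc => h (single_pair_eq_iff.1 hc))]

def mu0 : Fin 2 →₀ ℕ :=
  Finsupp.single 0 (k*r+1 + r*(2*m+1)) + Finsupp.single 1 (k*r+1)

lemma coeff_DT (hr : 2 ≤ r) :
    MvPolynomial.coeff (mu0 r m k) (DT r m k)
      = u1 r m k (Fin.last m) * u2 r m k 0 := by
  have hr0 : 0 < r := by omega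
  unfold DT mu0
  rw [T1x_eq, T1y_eq, T2x_eq, T2y_eq, coeff_sub, Finset.sum_mul_sum, Finset.sum_mul_sum]
  rw [MvPolynomial.coeff_sum, MvPolynomial.coeff_sum]
  have e1 : ∀ i : Fin (m+1), MvPolynomial.coeff
        (Finsupp.single (0:Fin 2) (k*r+1 + r*(2*m+1)) + Finsupp.single 1 (k*r+1))
        (∑ j : Fin (m+1), (C (u1 r m k i) * ((X 0:PolyS 2) ^ (An r m k i) * X 1 ^ (B1 r m i)))
          * (C (u2 r m k j) * ((X 0:PolyS 2) ^ (B2 r m j) * X 1 ^ (An r m k j))))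
      = if i = Fin.last m then u1 r m k (Fin.last m) * u2 r m k 0 else 0 := by
    intro i
    rw [MvPolynomial.coeff_sum]
    have e2 : ∀ j : Fin (m+1),
        MvPolynomial.coeff (Finsupp.single (0:Fin 2) (k*r+1 + r*(2*m+1)) + Finsupp.single 1 (k*r+1))
          ((C (u1 r m k i) * ((X 0:PolyS 2) ^ (An r m k i) * X 1 ^ (B1 r m i)))
            * (C (u2 r m k j) * ((X 0:PolyS 2) ^ (B2 r m j) * X 1 ^ (An r m k j))))
        = if i = Fin.last m ∧ j = 0 then u1 r m k (Fin.last m) * u2 r m k 0 else 0 := by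
      intro j
      rw [coeff_prod_term]
      have hiff : (An r m k i + B2 r m j = k*r+1 + r*(2*m+1)
          ∧ B1 r m i + An r m k j = k*r+1) ↔ (i = Fin.last m ∧ j = 0) := by
        constructor
        · rintro ⟨h1, h2⟩
          unfold An B1 at h2
          have hj : r*(m - (i:ℕ)) + r*(j:ℕ) = 0 := by omega
          have him : (i:ℕ) ≤ m := Nat.lt_succ_iff.1 i.isLt
          have hmi : m - (i:ℕ) = 0 ∧ (j:ℕ) = 0 := by
            rcases Nat.eq_zero_of_add_eq_zero_right hj with h3
            have h4 := Nat.eq_zero_of_add_eq_zero_left hj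
            constructor
            · rcases Nat.mul_eq_zero.1 h3 with h | h
              · omega
              · exact h
            · rcases Nat.mul_eq_zero.1 h4 with h | h
              · omega
              · exact h
          constructor
          · apply Fin.ext; simp [Fin.val_last]; omega
          · apply Fin.ext; simp [hmi.2]
        · rintro ⟨rfl, rfl⟩
          constructor
          · unfold An B2
            simp [Fin.val_last]
            ring
          · unfold An B1
            simp [Fin.val_last]
      rw [if_congr hiff rfl rfl]
      by_cases hc : i = Fin.last m ∧ j = 0
      · simp [hc.1, hc.2]
      · rw [if_neg hc, if_neg hc]
    rw [Finset.sum_congr rfl fun j _ => e2 j]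
    by_cases hi : i = Fin.last m
    · subst hi
      rw [Finset.sum_eq_single (0 : Fin (m+1))]
      · simp
      · intro j _ hj; rw [if_neg (fun hc => hj hc.2)]
      · intro h; exact absurd (Finset.mem_univ _) h
    · rw [if_neg hi]
      apply Finset.sum_eq_zero
      intro j _
      rw [if_neg (fun hc => hi hc.1)]
  have e3 : ∀ i : Fin (m+1), MvPolynomial.coeff
        (Finsupp.single (0:Fin 2) (k*r+1 + r*(2*m+1)) + Finsupp.single 1 (k*r+1))
        (∑ j : Fin (m+1), (C (u1 r m k i) * ((X 0:PolyS 2) ^ (B1 r m i) * X 1 ^ (An r m k i)))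
          * (C (u2 r m k j) * ((X 0:PolyS 2) ^ (An r m k j) * X 1 ^ (B2 r m j))))
      = 0 := by
    intro i
    rw [MvPolynomial.coeff_sum]
    apply Finset.sum_eq_zero
    intro j _
    rw [coeff_prod_term, if_neg]
    rintro ⟨h1, h2⟩
    unfold An B2 at h2
    omega
  rw [Finset.sum_congr rfl fun i _ => e1 i, Finset.sum_congr rfl fun i _ => e3 i]
  rw [Finset.sum_eq_single (Fin.last m)]
  · simp
  · intro i _ hi; rw [if_neg hi]
  · intro h; exact absurd (Finset.mem_univ _) h

lemma DT_ne_zero (hr : 2 ≤ r) : DT r m k ≠ 0 := by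
  intro h
  have := coeff_DT r m k hr
  rw [h, MvPolynomial.coeff_zero] at this
  exact mul_ne_zero (u1_ne_zero hr _) (u2_ne_zero hr _) this.symm

end DTne

end Saito

section Span

variable {r m k : ℕ}

lemma hT1x0 : (X 0 : PolyS 2)^(k*r+1) ∣ T1x r m k := dvd_mul_right _ _
lemma hT1y1 : (X 1 : PolyS 2)^(k*r+1) ∣ T1y r m k := dvd_mul_right _ _
lemma hT2x0 : (X 0 : PolyS 2)^(k*r+1) ∣ T2x r m k :=
  dvd_mul_of_dvd_left (dvd_mul_right _ _) _
lemma hT2y1 : (X 1 : PolyS 2)^(k*r+1) ∣ T2y r m k :=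
  dvd_mul_of_dvd_left (dvd_mul_right _ _) _

lemma Qpoly_dvd_DT (hr : 2 ≤ r) : Qpoly r m k ∣ DT r m k :=
  Qpoly_dvd_det m k hr _ _ _ _ hT1x0 hT1y1 hT2x0 hT2y1
    (fun ζ hζ => T1_L m k hr hζ) (fun ζ hζ => T2_L m k hr hζ)

lemma eta_div_facts {η : Derivation ℂ (PolyS 2) (PolyS 2)}
    (hη : InDeriv r ![k*r+1, k*r+1] (2*m+1) η) :
    ((X 0 : PolyS 2)^(k*r+1) ∣ η (X 0)) ∧ ((X 1 : PolyS 2)^(k*r+1) ∣ η (X 1)) ∧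
    (∀ ζ : ℂ, ζ ^ r = 1 →
      ((X 0 : PolyS 2) - C ζ * X 1)^(2*m+1) ∣ η (X 0) - C ζ * η (X 1)) := by
  obtain ⟨h1, h2⟩ := hη
  refine ⟨?_, ?_, ?_⟩
  · have := h1 0
    simp only [Matrix.cons_val_zero] at this
    exact Ideal.mem_span_singleton.1 this
  · have := h1 1
    simp only [Matrix.cons_val_one, Matrix.head_cons] at this
    exact Ideal.mem_span_singleton.1 this
  · intro ζ hζ
    have := h2 0 1 (by decide) ζ hζ
    rw [deriv_apply_lin] at this
    exact Ideal.mem_span_singleton.1 this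

lemma eta_span (hr : 2 ≤ r) (η : Derivation ℂ (PolyS 2) (PolyS 2))
    (hη : InDeriv r ![k*r+1, k*r+1] (2*m+1) η) :
    η ∈ Submodule.span (PolyS 2)
      {MvPolynomial.mkDerivation ℂ ![T1x r m k, T1y r m k],
       MvPolynomial.mkDerivation ℂ ![T2x r m k, T2y r m k]} := by
  obtain ⟨hη0, hη1, hηL⟩ := eta_div_facts hη
  obtain ⟨c, hc⟩ := eq_C_mul_of_dvd_homog (Qpoly_homog m k hr) (DT_homog r m k)
    (Qpoly_dvd_DT hr)
  have hc0 : c ≠ 0 := by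
    intro h
    rw [h, C_0, zero_mul] at hc
    exact DT_ne_zero r m k hr hc
  have hcc : C c * C c⁻¹ = (1 : PolyS 2) := by
    rw [← C_mul, mul_inv_cancel₀ hc0, C_1]
  have hdet1 : Qpoly r m k ∣ η (X 0) * T2y r m k - η (X 1) * T2x r m k :=
    Qpoly_dvd_det m k hr _ _ _ _ hη0 hη1 hT2x0 hT2y1 hηL (fun ζ hζ => T2_L m k hr hζ)
  have hdet2 : Qpoly r m k ∣ T1x r m k * η (X 1) - T1y r m k * η (X 0) :=
    Qpoly_dvd_det m k hr _ _ _ _ hT1x0 hT1y1 hη0 hη1 (fun ζ hζ => T1_L m k hr hζ) hηL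
  obtain ⟨g1, hg1⟩ := hdet1
  obtain ⟨g2, hg2⟩ := hdet2
  unfold DT at hc
  apply Submodule.mem_span_pair.2
  refine ⟨C c⁻¹ * g1, C c⁻¹ * g2, ?_⟩
  apply MvPolynomial.derivation_ext
  intro i
  have hDT0 : T1x r m k * T2y r m k - T1y r m k * T2x r m k ≠ 0 := by
    have := DT_ne_zero r m k hr
    unfold DT at this
    exact this
  fin_cases i
  · show (C c⁻¹ * g1) • (MvPolynomial.mkDerivation ℂ ![T1x r m k, T1y r m k]) (X 0)
        + (C c⁻¹ * g2) • (MvPolynomial.mkDerivation ℂ ![T2x r m k, T2y r m k]) (X 0)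
      = η (X 0)
    rw [mkDerivation_X, mkDerivation_X]
    simp only [Matrix.cons_val_zero, smul_eq_mul]
    apply mul_left_cancel₀ hDT0
    linear_combination (C c⁻¹ * (g1 * T1x r m k + g2 * T2x r m k)) * hc
      + (Qpoly r m k * (g1 * T1x r m k + g2 * T2x r m k)) * hcc
      - T1x r m k * hg1 - T2x r m k * hg2
  · show (C c⁻¹ * g1) • (MvPolynomial.mkDerivation ℂ ![T1x r m k, T1y r m k]) (X 1)
        + (C c⁻¹ * g2) • (MvPolynomial.mkDerivation ℂ ![T2x r m k, T2y r m k]) (X 1)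
      = η (X 1)
    rw [mkDerivation_X, mkDerivation_X]
    simp only [Matrix.cons_val_one, Matrix.head_cons, Matrix.cons_val_zero, smul_eq_mul]
    apply mul_left_cancel₀ hDT0
    linear_combination (C c⁻¹ * (g1 * T1y r m k + g2 * T2y r m k)) * hc
      + (Qpoly r m k * (g1 * T1y r m k + g2 * T2y r m k)) * hcc
      - T1y r m k * hg1 - T2y r m k * hg2

lemma theta_indep (hr : 2 ≤ r) :
    LinearIndependent (PolyS 2)
      ![MvPolynomial.mkDerivation ℂ ![T1x r m k, T1y r m k],
        MvPolynomial.mkDerivation ℂ ![T2x r m k, T2y r m k]] := by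
  rw [Fintype.linearIndependent_iff]
  intro g hg
  have hDT0 : T1x r m k * T2y r m k - T1y r m k * T2x r m k ≠ 0 := by
    have := DT_ne_zero r m k hr
    unfold DT at this
    exact this
  have hx : g 0 * T1x r m k + g 1 * T2x r m k = 0 := by
    have := congrArg (fun D : Derivation ℂ (PolyS 2) (PolyS 2) => D (X 0)) hg
    simpa [Fin.sum_univ_two, Derivation.add_apply, Derivation.smul_apply,
      mkDerivation_X, smul_eq_mul] using this
  have hy : g 0 * T1y r m k + g 1 * T2y r m k = 0 := by
    have := congrArg (fun D : Derivation ℂ (PolyS 2) (PolyS 2) => D (X 1)) hg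
    simpa [Fin.sum_univ_two, Derivation.add_apply, Derivation.smul_apply,
      mkDerivation_X, smul_eq_mul] using this
  have hg0 : g 0 = 0 := by
    refine (mul_eq_zero.1 ?_).resolve_right hDT0
    linear_combination T2y r m k * hx - T2x r m k * hy
  have hg1 : g 1 = 0 := by
    refine (mul_eq_zero.1 ?_).resolve_right hDT0
    linear_combination T1x r m k * hy - T1y r m k * hx
  intro i
  fin_cases i
  · exact hg0
  · exact hg1

end Span

section Final

variable (r m k : ℕ)

lemma q1_homog : (q1 r m k).IsHomogeneous m := q_homog _
lemma q2_homog : (q2 r m k).IsHomogeneous m := q_homog _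

lemma q1_coeff_x : MvPolynomial.coeff (Finsupp.single (0 : Fin 2) m) (q1 r m k)
    = cz m r (w1 m k) (Fin.last m) := q_coeff_x _
lemma q1_coeff_y : MvPolynomial.coeff (Finsupp.single (1 : Fin 2) m) (q1 r m k)
    = cz m r (w1 m k) 0 := q_coeff_y _
lemma q2_coeff_x : MvPolynomial.coeff (Finsupp.single (0 : Fin 2) m) (q2 r m k)
    = cz m r (w2 m k) (Fin.last m) := q_coeff_x _
lemma q2_coeff_y : MvPolynomial.coeff (Finsupp.single (1 : Fin 2) m) (q2 r m k)
    = cz m r (w2 m k) 0 := q_coeff_y _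

lemma theta1_homog :
    ∀ j : Fin 2, ((MvPolynomial.mkDerivation ℂ ![T1x r m k, T1y r m k]) (X j)).IsHomogeneous
      ((m + k) * r + 1) := by
  intro j
  have heq : (m + k) * r + 1 = k*r+1 + r*m := by ring
  rw [heq]
  fin_cases j
  · rw [mkDerivation_X]
    simpa using T1x_homog r m k
  · rw [mkDerivation_X]
    simpa using T1y_homog r m k

lemma theta2_homog :
    ∀ j : Fin 2, ((MvPolynomial.mkDerivation ℂ ![T2x r m k, T2y r m k]) (X j)).IsHomogeneous
      ((m + k + 1) * r + 1) := by
  intro j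
  have heq : (m + k + 1) * r + 1 = k*r+1 + r*m + r := by ring
  rw [heq]
  fin_cases j
  · rw [mkDerivation_X]
    simpa using T2x_homog r m k
  · rw [mkDerivation_X]
    simpa using T2y_homog r m k

lemma range_pair {α : Type*} (x y : α) : Set.range ![x, y] = {x, y} := by
  ext z
  simp [Fin.exists_fin_two]
  tauto

end Final

end AppPart
end StmtAux

theorem stmt10 (r m k : ℕ) (hr : 2 ≤ r) (hm : 1 ≤ m) :
    IsFreeWithExponents (InDeriv r ![k * r + 1, k * r + 1] (2 * m + 1))
      ![(m + k) * r + 1, (m + k + 1) * r + 1] ∧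
    ∃ q1 q2 : MvPolynomial (Fin 2) ℤ,
      -- `q1`, `q2` are homogeneous of degree `m` and the coefficients of `x^m` and of
      -- `y^m` in each of them are nonzero
      q1.IsHomogeneous m ∧ q2.IsHomogeneous m ∧
      MvPolynomial.coeff (Finsupp.single (0 : Fin 2) m) q1 ≠ 0 ∧
      MvPolynomial.coeff (Finsupp.single (1 : Fin 2) m) q1 ≠ 0 ∧
      MvPolynomial.coeff (Finsupp.single (0 : Fin 2) m) q2 ≠ 0 ∧
      MvPolynomial.coeff (Finsupp.single (1 : Fin 2) m) q2 ≠ 0 ∧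
      -- `θ1 = x^{kr+1} q1(x^r, y^r) ∂_x + y^{kr+1} q1(y^r, x^r) ∂_y` and
      -- `θ2 = x^{kr+1} y^r q2(x^r, y^r) ∂_x + y^{kr+1} x^r q2(y^r, x^r) ∂_y`
      -- form a basis of `D(A, μ)`:
      (fun θ1 θ2 : Derivation ℂ (PolyS 2) (PolyS 2) =>
          InDeriv r ![k * r + 1, k * r + 1] (2 * m + 1) θ1 ∧
          InDeriv r ![k * r + 1, k * r + 1] (2 * m + 1) θ2 ∧
          LinearIndependent (PolyS 2) ![θ1, θ2] ∧
          ∀ η, InDeriv r ![k * r + 1, k * r + 1] (2 * m + 1) η →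
            η ∈ Submodule.span (PolyS 2) {θ1, θ2})
        (MvPolynomial.mkDerivation ℂ
          ![X 0 ^ (k * r + 1) * MvPolynomial.aeval ![(X 0 : PolyS 2) ^ r, X 1 ^ r] q1,
            X 1 ^ (k * r + 1) * MvPolynomial.aeval ![(X 1 : PolyS 2) ^ r, X 0 ^ r] q1])
        (MvPolynomial.mkDerivation ℂ
          ![X 0 ^ (k * r + 1) * X 1 ^ r * MvPolynomial.aeval ![(X 0 : PolyS 2) ^ r, X 1 ^ r] q2,
            X 1 ^ (k * r + 1) * X 0 ^ r * MvPolynomial.aeval ![(X 1 : PolyS 2) ^ r, X 0 ^ r] q2]) := by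
  constructor
  · refine ⟨![MvPolynomial.mkDerivation ℂ ![StmtAux.T1x r m k, StmtAux.T1y r m k],
        MvPolynomial.mkDerivation ℂ ![StmtAux.T2x r m k, StmtAux.T2y r m k]], ?_, ?_, ?_, ?_⟩
    · intro i
      fin_cases i
      · exact StmtAux.theta1_inDeriv hr
      · exact StmtAux.theta2_inDeriv hr
    · exact StmtAux.theta_indep hr
    · intro η hη
      rw [StmtAux.range_pair]
      exact StmtAux.eta_span hr η hη
    · intro i
      fin_cases i
      · exact StmtAux.theta1_homog r m k
      · exact StmtAux.theta2_homog r m k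
  · refine ⟨StmtAux.q1 r m k, StmtAux.q2 r m k, StmtAux.q1_homog r m k,
      StmtAux.q2_homog r m k, ?_, ?_, ?_, ?_, ?_⟩
    · rw [StmtAux.q1_coeff_x]
      exact StmtAux.cz_ne_zero m r _ hr _
    · rw [StmtAux.q1_coeff_y]
      exact StmtAux.cz_ne_zero m r _ hr _
    · rw [StmtAux.q2_coeff_x]
      exact StmtAux.cz_ne_zero m r _ hr _
    · rw [StmtAux.q2_coeff_y]
      exact StmtAux.cz_ne_zero m r _ hr _
    · exact ⟨StmtAux.theta1_inDeriv hr, StmtAux.theta2_inDeriv hr,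
        StmtAux.theta_indep hr, fun η hη => StmtAux.eta_span hr η hη⟩

end
end

section
/- Let r ≥ 1, m ≥ 1, and A, B ∈ ℕ with B ≥ r(m−1), and suppose A − B is not divisible by r. Then the m×m integer matrix whose (i,j)-entry, for 0 ≤ i, j ≤ m−1, is binom(A + ri, 2j+1) − binom(B − ri, 2j+1) has nonzero determinant. -/
open Polynomial

/-- The `m × m` integer matrix with `(i,j)`-entry
`binom (A + r·i) (2j+1) - binom (B - r·i) (2j+1)` (for `0 ≤ i, j ≤ m-1`) has nonzero
determinant, provided `B ≥ r(m-1)` and `r ∤ A - B`. -/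
theorem stmt13 (r m : ℕ) (hr : 1 ≤ r) (hm : 1 ≤ m) (A B : ℕ)
    (hB : r * (m - 1) ≤ B)
    (hAB : ¬ ((r : ℤ) ∣ ((A : ℤ) - (B : ℤ)))) :
    Matrix.det (Matrix.of fun i j : Fin m =>
      ((A + r * (i : ℕ)).choose (2 * (j : ℕ) + 1) : ℤ) -
      ((B - r * (i : ℕ)).choose (2 * (j : ℕ) + 1) : ℤ)) ≠ 0 := by
  classical
  intro hdet
  have hriB : ∀ i : Fin m, r * (i : ℕ) ≤ B := fun i =>
    le_trans (Nat.mul_le_mul (le_refl r) (Nat.le_sub_one_of_lt i.isLt)) hB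
  obtain ⟨c, hc0, hcv⟩ := Matrix.exists_mulVec_eq_zero_iff.mpr hdet
  set S : ℚ := (A : ℚ) + (B : ℚ) with hS
  set F : Fin m → ℚ[X] := fun j =>
    descPochhammer ℚ (2 * (j:ℕ) + 1) -
      (descPochhammer ℚ (2 * (j:ℕ) + 1)).comp (C S - X) with hF
  have hFeval : ∀ (j : Fin m) (x : ℚ),
      (F j).eval x = (descPochhammer ℚ (2*(j:ℕ)+1)).eval x
        - (descPochhammer ℚ (2*(j:ℕ)+1)).eval (S - x) := by
    intro j x
    simp [hF, eval_comp]
  have hFodd : ∀ (j : Fin m) (x : ℚ), (F j).eval (S - x) = - (F j).eval x := by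
    intro j x
    rw [hFeval, hFeval, sub_sub_cancel]; ring
  have hq1 : (C S - X : ℚ[X]).natDegree = 1 := by
    rw [show (C S - X : ℚ[X]) = -(X - C S) by ring, natDegree_neg, natDegree_X_sub_C]
  have hFnd : ∀ j : Fin m, (F j).natDegree ≤ 2*(j:ℕ)+1 := by
    intro j
    refine le_trans (natDegree_sub_le _ _) ?_
    simp [natDegree_comp, hq1, descPochhammer_natDegree]
  have hFcoeff : ∀ j : Fin m, (F j).coeff (2*(j:ℕ)+1) = 2 := by
    intro j
    set k := 2*(j:ℕ)+1 with hk
    have hcomp_nd : ((descPochhammer ℚ k).comp (C S - X)).natDegree = k := by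
      rw [natDegree_comp, hq1, descPochhammer_natDegree, mul_one]
    have hlc : ((descPochhammer ℚ k).comp (C S - X)).leadingCoeff = -1 := by
      rw [leadingCoeff_comp (by rw [hq1]; norm_num), (monic_descPochhammer ℚ k).leadingCoeff,
        one_mul, descPochhammer_natDegree,
        show (C S - X : ℚ[X]) = -(X - C S) by ring, leadingCoeff_neg,
        (monic_X_sub_C S).leadingCoeff]
      exact Odd.neg_one_pow ⟨(j:ℕ), by omega⟩
    have h1 : (descPochhammer ℚ k).coeff k = 1 := by
      have := (monic_descPochhammer ℚ k).coeff_natDegree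
      rwa [descPochhammer_natDegree] at this
    have h2 : ((descPochhammer ℚ k).comp (C S - X)).coeff k = -1 := by
      have h2' := hlc
      rw [← coeff_natDegree, hcomp_nd] at h2'
      exact h2'
    rw [hF]
    simp only [coeff_sub, ← hk, h1, h2]
    norm_num
  -- evaluation at the points A + r i
  have hA : ∀ i j : Fin m,
      (F j).eval ((A + r * (i:ℕ) : ℕ) : ℚ)
        = ((Nat.factorial (2*(j:ℕ)+1)) : ℚ) *
          (((A + r*(i:ℕ)).choose (2*(j:ℕ)+1) : ℚ) -
            ((B - r*(i:ℕ)).choose (2*(j:ℕ)+1) : ℚ)) := by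
    intro i j
    have h1 : S - ((A + r * (i:ℕ) : ℕ) : ℚ) = ((B - r * (i:ℕ) : ℕ) : ℚ) := by
      have := hriB i
      push_cast [this]
      ring
    rw [hFeval, h1, descPochhammer_eval_eq_descFactorial,
      descPochhammer_eval_eq_descFactorial,
      Nat.descFactorial_eq_factorial_mul_choose, Nat.descFactorial_eq_factorial_mul_choose]
    push_cast
    ring
  set P : ℚ[X] := ∑ j : Fin m, C ((c j : ℚ) / ((Nat.factorial (2*(j:ℕ)+1)) : ℚ)) * F j with hP
  have hPa : ∀ i : Fin m, P.eval ((A + r * (i:ℕ) : ℕ) : ℚ) = 0 := by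
    intro i
    have hrow : ∑ j : Fin m,
        ((((A + r*(i:ℕ)).choose (2*(j:ℕ)+1) : ℤ) -
          ((B - r*(i:ℕ)).choose (2*(j:ℕ)+1) : ℤ)) * c j) = 0 := by
      have h := congrFun hcv i
      simpa [Matrix.mulVec, dotProduct] using h
    have hrowQ : ∑ j : Fin m,
        ((((A + r*(i:ℕ)).choose (2*(j:ℕ)+1) : ℚ) -
          ((B - r*(i:ℕ)).choose (2*(j:ℕ)+1) : ℚ)) * (c j : ℚ)) = 0 := by
      exact_mod_cast congrArg (fun z : ℤ => (z : ℚ)) hrow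
    rw [hP, eval_finset_sum]
    rw [show ∑ j : Fin m, ((C ((c j : ℚ) / ((Nat.factorial (2*(j:ℕ)+1)) : ℚ)) * F j).eval
        ((A + r * (i:ℕ) : ℕ) : ℚ))
      = ∑ j : Fin m, ((((A + r*(i:ℕ)).choose (2*(j:ℕ)+1) : ℚ) -
          ((B - r*(i:ℕ)).choose (2*(j:ℕ)+1) : ℚ)) * (c j : ℚ)) from ?_, hrowQ]
    refine Finset.sum_congr rfl fun j _ => ?_
    have hkne : ((Nat.factorial (2*(j:ℕ)+1)) : ℚ) ≠ 0 := Nat.cast_ne_zero.mpr (Nat.factorial_ne_zero _)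
    rw [eval_mul, eval_C, hA i j]
    field_simp
  have hPodd : ∀ x : ℚ, P.eval (S - x) = - P.eval x := by
    intro x
    rw [hP, eval_finset_sum, eval_finset_sum, ← Finset.sum_neg_distrib]
    refine Finset.sum_congr rfl fun j _ => ?_
    rw [eval_mul, eval_mul, eval_C, eval_C, hFodd]
    ring
  have hPb : ∀ i : Fin m, P.eval ((B - r*(i:ℕ) : ℕ) : ℚ) = 0 := by
    intro i
    have h1 : ((B - r * (i:ℕ) : ℕ) : ℚ) = S - ((A + r * (i:ℕ) : ℕ) : ℚ) := by
      have := hriB i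
      push_cast [this]
      ring
    rw [h1, hPodd, hPa, neg_zero]
  -- P is nonzero
  have hTne : (Finset.univ.filter (fun j : Fin m => c j ≠ 0)).Nonempty := by
    obtain ⟨j, hj⟩ := Function.ne_iff.mp hc0
    exact ⟨j, Finset.mem_filter.mpr ⟨Finset.mem_univ _, hj⟩⟩
  set j0 := (Finset.univ.filter (fun j : Fin m => c j ≠ 0)).max' hTne with hj0
  have hcj0 : c j0 ≠ 0 :=
    (Finset.mem_filter.mp ((Finset.univ.filter _).max'_mem hTne)).2
  have hPcoeff : P.coeff (2*(j0:ℕ)+1) = (c j0 : ℚ) / ((Nat.factorial (2*(j0:ℕ)+1)) : ℚ) * 2 := by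
    rw [hP, finset_sum_coeff, Finset.sum_eq_single j0]
    · rw [coeff_C_mul, hFcoeff]
    · intro j _ hj
      rw [coeff_C_mul]
      rcases eq_or_ne (c j) 0 with h | h
      · simp [h]
      · have hjle : j ≤ j0 :=
          Finset.le_max' _ j (Finset.mem_filter.mpr ⟨Finset.mem_univ _, h⟩)
        have hjlt : (j:ℕ) < (j0:ℕ) :=
          lt_of_le_of_ne hjle (fun hh => hj (Fin.ext hh))
        rw [coeff_eq_zero_of_natDegree_lt (lt_of_le_of_lt (hFnd j) (by omega)), mul_zero]
    · intro h; exact absurd (Finset.mem_univ j0) h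
  have hPne : P ≠ 0 := by
    intro h
    rw [h, coeff_zero] at hPcoeff
    have hkne : ((Nat.factorial (2*(j0:ℕ)+1)) : ℚ) ≠ 0 := Nat.cast_ne_zero.mpr (Nat.factorial_ne_zero _)
    have : (c j0 : ℚ) = 0 := by
      have h2 := hPcoeff.symm
      rw [mul_eq_zero, div_eq_zero_iff] at h2
      rcases h2 with (h2 | h2) | h2
      · exact h2
      · exact absurd h2 hkne
      · norm_num at h2
    exact hcj0 (by exact_mod_cast this)
  -- degree bound
  have hPnd : P.natDegree ≤ 2 * m - 1 := by
    rw [hP]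
    apply natDegree_sum_le_of_forall_le
    intro j _
    refine le_trans (natDegree_C_mul_le _ _) (le_trans (hFnd j) ?_)
    have : (j:ℕ) < m := j.isLt
    omega
  -- the 2m points, pairwise distinct
  set f : Fin m ⊕ Fin m → ℚ :=
    Sum.elim (fun i => ((A + r*(i:ℕ) : ℕ) : ℚ)) (fun i => ((B - r*(i:ℕ) : ℕ) : ℚ)) with hf
  have hne : ∀ i i' : Fin m, (A + r*(i:ℕ) : ℕ) ≠ (B - r*(i':ℕ) : ℕ) := by
    intro i i' h
    apply hAB
    have hb := hriB i'
    have h2 : A + r*(i:ℕ) + r*(i':ℕ) = B := by omega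
    refine ⟨-((i:ℤ) + (i':ℤ)), ?_⟩
    have h3 : (A:ℤ) + r*(i:ℕ) + r*(i':ℕ) = (B:ℤ) := by exact_mod_cast congrArg (Nat.cast : ℕ → ℤ) h2
    push_cast at h3 ⊢
    linarith
  have hinj : Function.Injective f := by
    rintro (i | i) (i' | i') h <;>
      simp only [hf, Sum.elim_inl, Sum.elim_inr, Nat.cast_inj] at h
    · have := Nat.eq_of_mul_eq_mul_left (by omega : 0 < r) (by omega : r*(i:ℕ) = r*(i':ℕ))
      exact congrArg Sum.inl (Fin.ext this)
    · exact absurd h (hne i i')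
    · exact absurd h.symm (hne i' i)
    · have hb := hriB i; have hb' := hriB i'
      have := Nat.eq_of_mul_eq_mul_left (by omega : 0 < r)
        (by omega : r*(i:ℕ) = r*(i':ℕ))
      exact congrArg Sum.inr (Fin.ext this)
  have heval : ∀ x, P.eval (f x) = 0 := by
    rintro (i | i)
    · exact hPa i
    · exact hPb i
  have hcard : P.natDegree < Fintype.card (Fin m ⊕ Fin m) := by
    simp only [Fintype.card_sum, Fintype.card_fin]
    omega
  exact hPne (Polynomial.eq_zero_of_natDegree_lt_card_of_eval_eq_zero P hinj heval hcard)
end
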